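/- Let θ_s be defined by s! = √(2πs) sˢ e^{-s} e^{θ_s} (Stirling's formula with error term), so that the binomial probability B_n(m) = C(n,m) p^m q^{n-m} with q = 1 - p, m = np + x√(npq), satisfies √(npq) B_n(m) → (1/√(2π)) e^{-x²/2} as n → ∞ with x fixed in a bounded interval. -/

import Mathlib

open Filter Real

lemma hlog_bound {e : ℝ} (he : |e| ≤ 1/2) :
    |(1+e) * Real.log (1+e) - e - e^2/2| ≤ 4 * |e|^3 := by
  have h1 : |(-e)| < 1 := by rw [abs_neg]; linarith
  have key := Real.abs_log_sub_add_sum_range_le h1 2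
  have hsum : (∑ i ∈ Finset.range 2, (-e) ^ (i + 1) / (i + 1)) = -e + e^2/2 := by
    simp [Finset.sum_range_succ]; ring
  rw [hsum] at key
  have h2 : (1 : ℝ) - -e = 1 + e := by ring
  rw [h2] at key
  set r := -e + e^2/2 + Real.log (1+e) with hr
  have hrb : |r| ≤ 2 * |e|^3 := by
    refine key.trans ?_
    rw [abs_neg]
    rw [div_le_iff₀ (by rw [abs_neg] at h1; linarith)]
    have h5 : (0:ℝ) ≤ |e|^3 := pow_nonneg (abs_nonneg e) 3
    have h6 : |e|^(2+1) = |e|^3 := by norm_num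
    rw [h6]
    nlinarith [abs_nonneg e]
  have hid : (1+e) * Real.log (1+e) - e - e^2/2 = (1+e) * r - e^3/2 := by
    rw [hr]; ring
  rw [hid]
  have h3 : |(1+e) * r - e^3/2| ≤ |1+e| * |r| + |e|^3/2 := by
    calc |(1+e) * r - e^3/2| ≤ |(1+e)*r| + |e^3/2| := abs_sub _ _
    _ = |1+e| * |r| + |e|^3/2 := by rw [abs_mul, abs_div, abs_pow]; norm_num
  have h4 : |1+e| ≤ 3/2 := by
    rw [abs_le] at he ⊢; constructor <;> linarith [he.1, he.2]
  have h5 : (0:ℝ) ≤ |e|^3 := pow_nonneg (abs_nonneg e) 3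
  nlinarith [abs_nonneg r, abs_nonneg (1+e)]

lemma stirling_pos {j : ℕ} (hj : 1 ≤ j) : 0 < Stirling.stirlingSeq j := by
  obtain ⟨i, rfl⟩ := Nat.exists_eq_succ_of_ne_zero (by omega : j ≠ 0)
  exact Stirling.stirlingSeq'_pos i

lemma stirling_fact {j : ℕ} (hj : 1 ≤ j) :
    (j.factorial : ℝ) = Stirling.stirlingSeq j * (Real.sqrt (2*(j:ℝ)) * ((j:ℝ)/Real.exp 1)^j) := by
  have hj0 : (0:ℝ) < j := by exact_mod_cast hj
  rw [Stirling.stirlingSeq]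
  rw [div_mul_cancel₀]
  positivity

set_option maxHeartbeats 2000000 in
/-- Local central limit theorem (de Moivre–Laplace): if `0 < p < 1`, `q = 1 - p`, and
`m n` is an integer sequence with `m n ≤ n` such that `(m n - n p)/√(n p q) → x`, then
`√(n p q) · C(n, m n) p^{m n} q^{n - m n} → e^{-x²/2}/√(2π)`. -/
theorem de_moivre_laplace_local (p : ℝ) (hp : 0 < p) (hp1 : p < 1)
    (q : ℝ) (hq : q = 1 - p) (m : ℕ → ℕ) (hm : ∀ n, m n ≤ n) (x : ℝ)
    (hx : Tendsto (fun n : ℕ => ((m n : ℝ) - n * p) / Real.sqrt (n * p * q))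
      atTop (nhds x)) :
    Tendsto (fun n : ℕ =>
        Real.sqrt (n * p * q) * (n.choose (m n) : ℝ) * p ^ (m n) * q ^ (n - m n))
      atTop (nhds ((1 / Real.sqrt (2 * π)) * Real.exp (-x ^ 2 / 2))) := by
  have hq0 : 0 < q := by rw [hq]; linarith
  have hq1 : p + q = 1 := by rw [hq]; ring
  set t : ℕ → ℝ := fun n : ℕ => ((m n : ℝ) - n * p) / Real.sqrt (n * p * q) with ht_def
  set u : ℕ → ℝ := fun n : ℕ => (m n : ℝ) / ((n:ℝ) * p) with hu_def
  set v : ℕ → ℝ := fun n : ℕ => ((n - m n : ℕ) : ℝ) / ((n:ℝ) * q) with hv_def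
  -- cast of nat subtraction
  have hcast : ∀ n : ℕ, ((n - m n : ℕ) : ℝ) = (n:ℝ) - (m n : ℝ) := fun n =>
    Nat.cast_sub (hm n)
  -- √(n p q)/n → 0
  have hsqrtN : Tendsto (fun n : ℕ => Real.sqrt ((n:ℝ)) ) atTop atTop := by
    have h := (tendsto_rpow_atTop (y := (1:ℝ)/2) (by norm_num)).comp
      (tendsto_natCast_atTop_atTop (R := ℝ))
    refine h.congr fun n => ?_
    simp [Real.sqrt_eq_rpow]
  have hsqrt0 : Tendsto (fun n : ℕ => Real.sqrt ((n:ℝ) * p * q) / n) atTop (nhds 0) := by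
    have h1 : Tendsto (fun n : ℕ => Real.sqrt (p*q) * (Real.sqrt ((n:ℝ)))⁻¹) atTop (nhds 0) := by
      have := (tendsto_inv_atTop_zero.comp hsqrtN).const_mul (Real.sqrt (p*q))
      simpa using this
    refine h1.congr' ?_
    filter_upwards [eventually_ge_atTop 1] with n hn
    have hn0 : (0:ℝ) < n := by exact_mod_cast hn
    have h2 : (n:ℝ) * p * q = (n:ℝ) * (p*q) := by ring
    have key : Real.sqrt ((n:ℝ)) / (n:ℝ) = (Real.sqrt (n:ℝ))⁻¹ := by
      have h4 : Real.sqrt (n:ℝ) ≠ 0 := by positivity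
      field_simp
      exact Real.sq_sqrt hn0.le
    rw [h2, Real.sqrt_mul hn0.le, mul_comm (Real.sqrt (n:ℝ)), mul_div_assoc, key]
  -- m n / n → p
  have hmn : Tendsto (fun n : ℕ => (m n : ℝ) / n) atTop (nhds p) := by
    have h1 : Tendsto (fun n : ℕ => p + t n * (Real.sqrt ((n:ℝ)*p*q)/n)) atTop (nhds p) := by
      have := hx.mul hsqrt0
      have h2 := (tendsto_const_nhds (x := p) (f := atTop (α := ℕ))).add this
      simpa using h2
    refine h1.congr' ?_
    filter_upwards [eventually_ge_atTop 1] with n hn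
    have hn0 : (0:ℝ) < n := by exact_mod_cast hn
    have hs : (0:ℝ) < Real.sqrt ((n:ℝ)*p*q) := Real.sqrt_pos.2 (by positivity)
    rw [ht_def]
    field_simp
    ring
  have hu1 : Tendsto u atTop (nhds 1) := by
    have h1 := hmn.div_const p
    rw [div_self (ne_of_gt hp)] at h1
    refine h1.congr fun n => ?_
    rw [hu_def, div_div]
  have hv1 : Tendsto v atTop (nhds 1) := by
    have h1 : Tendsto (fun n : ℕ => (1 - (m n : ℝ)/n) / q) atTop (nhds 1) := by
      have h2 := ((tendsto_const_nhds (x := (1:ℝ)) (f := atTop (α := ℕ))).sub hmn).div_const q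
      have h3 : (1 - p)/q = 1 := by rw [hq]; exact div_self (by linarith)
      rw [h3] at h2; exact h2
    refine h1.congr' ?_
    filter_upwards [eventually_ge_atTop 1] with n hn
    have hn0 : (0:ℝ) < n := by exact_mod_cast hn
    show (1 - (m n : ℝ)/(n:ℝ))/q = ((n - m n : ℕ):ℝ)/((n:ℝ)*q)
    rw [hcast n]
    field_simp
  -- eventual lower bounds, tendsto atTop of m and n - m
  have hmR : ∀ᶠ n : ℕ in atTop, (p/2) * (n:ℝ) ≤ (m n : ℝ) := by
    filter_upwards [hu1.eventually (eventually_gt_nhds (by norm_num : (1:ℝ)/2 < 1)),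
      eventually_ge_atTop 1] with n hn hn1
    have hn0 : (0:ℝ) < n := by exact_mod_cast hn1
    have hnp : (0:ℝ) < (n:ℝ)*p := by positivity
    simp only [hu_def] at hn
    have h2 := (lt_div_iff₀ hnp).mp hn
    have h3 : (p/2)*(n:ℝ) = 1/2*((n:ℝ)*p) := by ring
    linarith
  have hlR : ∀ᶠ n : ℕ in atTop, (q/2) * (n:ℝ) ≤ ((n - m n : ℕ) : ℝ) := by
    filter_upwards [hv1.eventually (eventually_gt_nhds (by norm_num : (1:ℝ)/2 < 1)),
      eventually_ge_atTop 1] with n hn hn1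
    have hn0 : (0:ℝ) < n := by exact_mod_cast hn1
    have hnq : (0:ℝ) < (n:ℝ)*q := by positivity
    simp only [hv_def] at hn
    have h2 := (lt_div_iff₀ hnq).mp hn
    have h3 : (q/2)*(n:ℝ) = 1/2*((n:ℝ)*q) := by ring
    linarith
  have hmtop : Tendsto m atTop atTop := by
    rw [← tendsto_natCast_atTop_iff (R := ℝ)]
    refine tendsto_atTop_mono' atTop hmR ?_
    have := (tendsto_natCast_atTop_atTop (R := ℝ)).const_mul_atTop
      (by linarith : (0:ℝ) < p/2)
    exact this
  have hltop : Tendsto (fun n => n - m n) atTop atTop := by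
    rw [← tendsto_natCast_atTop_iff (R := ℝ)]
    refine tendsto_atTop_mono' atTop hlR ?_
    have := (tendsto_natCast_atTop_atTop (R := ℝ)).const_mul_atTop
      (by linarith : (0:ℝ) < q/2)
    exact this
  have hev1 : ∀ᶠ n : ℕ in atTop, 1 ≤ m n := hmtop.eventually_ge_atTop 1
  have hev2 : ∀ᶠ n : ℕ in atTop, 1 ≤ n - m n := hltop.eventually_ge_atTop 1
  -- key algebraic identities
  have hI : ∀ᶠ n : ℕ in atTop, (n:ℝ)*p*(u n - 1)^2 = t n^2 * q := by
    filter_upwards [eventually_ge_atTop 1] with n hn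
    have hn0 : (0:ℝ) < n := by exact_mod_cast hn
    have hnpq : (0:ℝ) ≤ (n:ℝ)*p*q := by positivity
    show (n:ℝ)*p*((m n:ℝ)/((n:ℝ)*p) - 1)^2
      = (((m n:ℝ) - (n:ℝ)*p)/Real.sqrt ((n:ℝ)*p*q))^2 * q
    rw [div_pow, Real.sq_sqrt hnpq]
    field_simp
  have hI2 : ∀ᶠ n : ℕ in atTop, (n:ℝ)*q*(v n - 1)^2 = t n^2 * p := by
    filter_upwards [eventually_ge_atTop 1] with n hn
    have hn0 : (0:ℝ) < n := by exact_mod_cast hn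
    have hnpq : (0:ℝ) ≤ (n:ℝ)*p*q := by positivity
    show (n:ℝ)*q*(((n - m n : ℕ):ℝ)/((n:ℝ)*q) - 1)^2
      = (((m n:ℝ) - (n:ℝ)*p)/Real.sqrt ((n:ℝ)*p*q))^2 * p
    have hstep : ((n:ℝ) - (m n:ℝ)) / ((n:ℝ)*q) - 1 = ((n:ℝ)*p - (m n:ℝ))/((n:ℝ)*q) := by
      have hne : (n:ℝ)*(1-p) ≠ 0 := mul_ne_zero (ne_of_gt hn0) (ne_of_gt (by linarith : (0:ℝ) < 1 - p))
      rw [hq, div_sub_one hne]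
      congr 1
      ring
    rw [hcast n, hstep, div_pow, div_pow, Real.sq_sqrt hnpq]
    field_simp
    ring
  have hε : Tendsto (fun n => u n - 1) atTop (nhds 0) := by
    simpa using hu1.sub_const 1
  have hδ : Tendsto (fun n => v n - 1) atTop (nhds 0) := by
    simpa using hv1.sub_const 1
  have hε2 : ∀ᶠ n : ℕ in atTop, |u n - 1| ≤ 1/2 := by
    have h := hε.abs
    rw [abs_zero] at h
    exact h.eventually (eventually_le_nhds (by norm_num))
  have hδ2 : ∀ᶠ n : ℕ in atTop, |v n - 1| ≤ 1/2 := by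
    have h := hδ.abs
    rw [abs_zero] at h
    exact h.eventually (eventually_le_nhds (by norm_num))
  -- P limit
  have hPbound : ∀ᶠ n : ℕ in atTop,
      |(n:ℝ)*p*(u n * Real.log (u n) - (u n - 1)) - t n^2*q/2| ≤ 4*(t n^2*q)*|u n - 1| := by
    filter_upwards [hI, hε2, eventually_ge_atTop 1] with n hIn h12 hn
    have hn0 : (0:ℝ) < n := by exact_mod_cast hn
    have key := hlog_bound h12
    rw [show (1:ℝ) + (u n - 1) = u n from by ring] at key
    have h2 : (n:ℝ)*p*(u n * Real.log (u n) - (u n - 1)) - t n^2*q/2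
        = ((n:ℝ)*p) * (u n * Real.log (u n) - (u n - 1) - (u n - 1)^2/2) := by
      linear_combination (1/2 : ℝ) * hIn
    have h3 : |(n:ℝ)*p*(u n * Real.log (u n) - (u n - 1)) - t n^2*q/2|
        ≤ (n:ℝ)*p * (4*|u n - 1|^3) := by
      rw [h2, abs_mul, abs_of_nonneg (by positivity : (0:ℝ) ≤ (n:ℝ)*p)]
      exact mul_le_mul_of_nonneg_left key (by positivity)
    have h5 : |u n - 1|^3 = (u n - 1)^2 * |u n - 1| := by
      rw [pow_succ, sq_abs]
    have h4 : (n:ℝ)*p*(4*|u n - 1|^3) = 4*(t n^2*q)*|u n - 1| := by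
      rw [h5, ← hIn]; ring
    rw [h4] at h3; exact h3
  have hQbound : ∀ᶠ n : ℕ in atTop,
      |(n:ℝ)*q*(v n * Real.log (v n) - (v n - 1)) - t n^2*p/2| ≤ 4*(t n^2*p)*|v n - 1| := by
    filter_upwards [hI2, hδ2, eventually_ge_atTop 1] with n hIn h12 hn
    have hn0 : (0:ℝ) < n := by exact_mod_cast hn
    have key := hlog_bound h12
    rw [show (1:ℝ) + (v n - 1) = v n from by ring] at key
    have h2 : (n:ℝ)*q*(v n * Real.log (v n) - (v n - 1)) - t n^2*p/2
        = ((n:ℝ)*q) * (v n * Real.log (v n) - (v n - 1) - (v n - 1)^2/2) := by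
      linear_combination (1/2 : ℝ) * hIn
    have h3 : |(n:ℝ)*q*(v n * Real.log (v n) - (v n - 1)) - t n^2*p/2|
        ≤ (n:ℝ)*q * (4*|v n - 1|^3) := by
      rw [h2, abs_mul, abs_of_nonneg (by positivity : (0:ℝ) ≤ (n:ℝ)*q)]
      exact mul_le_mul_of_nonneg_left key (by positivity)
    have h5 : |v n - 1|^3 = (v n - 1)^2 * |v n - 1| := by
      rw [pow_succ, sq_abs]
    have h4 : (n:ℝ)*q*(4*|v n - 1|^3) = 4*(t n^2*p)*|v n - 1| := by
      rw [h5, ← hIn]; ring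
    rw [h4] at h3; exact h3
  have hPlim : Tendsto (fun n : ℕ => (n:ℝ)*p*(u n * Real.log (u n) - (u n - 1)))
      atTop (nhds (x^2*q/2)) := by
    have hb : Tendsto (fun n : ℕ => 4*(t n^2*q)*|u n - 1|) atTop (nhds 0) := by
      have := (((hx.pow 2).mul_const q).const_mul 4).mul hε.abs
      simpa using this
    have h0 : Tendsto (fun n : ℕ =>
        (n:ℝ)*p*(u n * Real.log (u n) - (u n - 1)) - t n^2*q/2) atTop (nhds 0) :=
      squeeze_zero_norm' (hPbound.mono fun n h => by simpa [Real.norm_eq_abs] using h) hb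
    have h1 := h0.add (((hx.pow 2).mul_const q).div_const 2)
    rw [zero_add] at h1
    exact h1.congr fun n => by ring
  have hQlim : Tendsto (fun n : ℕ => (n:ℝ)*q*(v n * Real.log (v n) - (v n - 1)))
      atTop (nhds (x^2*p/2)) := by
    have hb : Tendsto (fun n : ℕ => 4*(t n^2*p)*|v n - 1|) atTop (nhds 0) := by
      have := (((hx.pow 2).mul_const p).const_mul 4).mul hδ.abs
      simpa using this
    have h0 : Tendsto (fun n : ℕ =>
        (n:ℝ)*q*(v n * Real.log (v n) - (v n - 1)) - t n^2*p/2) atTop (nhds 0) :=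
      squeeze_zero_norm' (hQbound.mono fun n h => by simpa [Real.norm_eq_abs] using h) hb
    have h1 := h0.add (((hx.pow 2).mul_const p).div_const 2)
    rw [zero_add] at h1
    exact h1.congr fun n => by ring
  have hg : Tendsto (fun n : ℕ =>
      -((n:ℝ)*p*(u n * Real.log (u n) - (u n - 1))
        + (n:ℝ)*q*(v n * Real.log (v n) - (v n - 1)))) atTop (nhds (-x^2/2)) := by
    have h := (hPlim.add hQlim).neg
    have hval : -(x^2*q/2 + x^2*p/2) = -x^2/2 := by rw [hq]; ring
    rw [hval] at h
    exact h
  -- E limit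
  have hElim : Tendsto (fun n : ℕ =>
      ((n:ℝ)*p/(m n:ℝ))^(m n) * ((n:ℝ)*q/((n - m n : ℕ):ℝ))^(n - m n))
      atTop (nhds (Real.exp (-x^2/2))) := by
    have hcont := (Real.continuous_exp.tendsto _).comp hg
    refine Tendsto.congr' ?_ hcont
    filter_upwards [hev1, hev2, eventually_ge_atTop 1] with n h1m h1l h1n
    have hN0 : (0:ℝ) < n := by exact_mod_cast h1n
    have hK0 : (0:ℝ) < (m n:ℝ) := by exact_mod_cast h1m
    have hL0 : (0:ℝ) < ((n - m n : ℕ):ℝ) := by exact_mod_cast h1l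
    have ha : (0:ℝ) < (n:ℝ)*p/(m n:ℝ) := by positivity
    have hb : (0:ℝ) < (n:ℝ)*q/((n - m n : ℕ):ℝ) := by positivity
    show Real.exp _ = _
    rw [← Real.exp_log ha, ← Real.exp_log hb, ← Real.exp_nat_mul, ← Real.exp_nat_mul,
      ← Real.exp_add]
    congr 1
    have hKu : (m n : ℝ) = (n:ℝ)*p*u n := by
      show _ = (n:ℝ)*p*((m n:ℝ)/((n:ℝ)*p))
      field_simp
    have hLv : ((n - m n : ℕ):ℝ) = (n:ℝ)*q*v n := by
      show _ = (n:ℝ)*q*(((n - m n : ℕ):ℝ)/((n:ℝ)*q))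
      field_simp
    have hlogu : Real.log ((n:ℝ)*p/(m n:ℝ)) = - Real.log (u n) := by
      rw [← Real.log_inv]
      congr 1
      show ((n:ℝ)*p/(m n:ℝ)) = ((m n:ℝ)/((n:ℝ)*p))⁻¹
      rw [inv_div]
    have hlogv : Real.log ((n:ℝ)*q/((n - m n : ℕ):ℝ)) = - Real.log (v n) := by
      rw [← Real.log_inv]
      congr 1
      show ((n:ℝ)*q/((n - m n : ℕ):ℝ)) = (((n - m n : ℕ):ℝ)/((n:ℝ)*q))⁻¹
      rw [inv_div]
    have hsum : (n:ℝ)*p*u n + (n:ℝ)*q*v n = (n:ℝ) := by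
      rw [← hKu, ← hLv, hcast n]; ring
    rw [hlogu, hlogv]
    show -((n:ℝ)*p*(u n * Real.log (u n) - (u n - 1))
        + (n:ℝ)*q*(v n * Real.log (v n) - (v n - 1)))
      = (m n:ℝ) * -Real.log (u n) + ((n - m n : ℕ):ℝ) * -Real.log (v n)
    linear_combination (Real.log (u n)) * hKu + (Real.log (v n)) * hLv + hsum - (n:ℝ)*hq
  -- A limit
  have hsπ := Stirling.tendsto_stirlingSeq_sqrt_pi
  have hπ0 : (0:ℝ) < Real.sqrt π := Real.sqrt_pos.2 Real.pi_pos
  have hAlim : Tendsto (fun n : ℕ => Stirling.stirlingSeq n /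
      (Stirling.stirlingSeq (m n) * Stirling.stirlingSeq (n - m n)))
      atTop (nhds (Real.sqrt π / (Real.sqrt π * Real.sqrt π))) :=
    hsπ.div ((hsπ.comp hmtop).mul (hsπ.comp hltop)) (by positivity)
  -- B limit
  have hBlim : Tendsto (fun n : ℕ => Real.sqrt ((n:ℝ)*p*q) * Real.sqrt (2*(n:ℝ)) /
      (Real.sqrt (2*(m n:ℝ)) * Real.sqrt (2*((n - m n : ℕ):ℝ))))
      atTop (nhds (Real.sqrt 2⁻¹)) := by
    have hin : Tendsto (fun n : ℕ => (2*(u n * v n))⁻¹) atTop (nhds (2⁻¹)) := by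
      have := ((hu1.mul hv1).const_mul 2).inv₀ (by norm_num : (2:ℝ)*(1*1) ≠ 0)
      simpa using this
    have hcomp := (Real.continuous_sqrt.tendsto _).comp hin
    refine Tendsto.congr' ?_ hcomp
    filter_upwards [hev1, hev2, eventually_ge_atTop 1] with n h1m h1l h1n
    have hN0 : (0:ℝ) < n := by exact_mod_cast h1n
    have hK0 : (0:ℝ) < (m n:ℝ) := by exact_mod_cast h1m
    have hL0 : (0:ℝ) < ((n - m n : ℕ):ℝ) := by exact_mod_cast h1l
    show Real.sqrt ((2*(u n * v n))⁻¹) = Real.sqrt ((n:ℝ)*p*q) * Real.sqrt (2*(n:ℝ)) /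
      (Real.sqrt (2*(m n:ℝ)) * Real.sqrt (2*((n - m n : ℕ):ℝ)))
    have harg : (2*(u n * v n))⁻¹
        = ((n:ℝ)*p*q) * (2*(n:ℝ)) / ((2*(m n:ℝ)) * (2*((n - m n : ℕ):ℝ))) := by
      show (2*(((m n:ℝ)/((n:ℝ)*p)) * (((n - m n : ℕ):ℝ)/((n:ℝ)*q))))⁻¹ = _
      field_simp
    rw [harg, Real.sqrt_div (by positivity : (0:ℝ) ≤ ((n:ℝ)*p*q) * (2*(n:ℝ))),
      Real.sqrt_mul (by positivity : (0:ℝ) ≤ (n:ℝ)*p*q),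
      Real.sqrt_mul (by positivity : (0:ℝ) ≤ 2*(m n:ℝ))]
  -- the master pointwise identity
  have heq : ∀ᶠ n : ℕ in atTop,
      Real.sqrt ((n:ℝ)*p*q) * (n.choose (m n) : ℝ) * p^(m n) * q^(n - m n)
      = (Stirling.stirlingSeq n /
          (Stirling.stirlingSeq (m n) * Stirling.stirlingSeq (n - m n)))
        * (Real.sqrt ((n:ℝ)*p*q) * Real.sqrt (2*(n:ℝ)) /
          (Real.sqrt (2*(m n:ℝ)) * Real.sqrt (2*((n - m n : ℕ):ℝ))))
        * (((n:ℝ)*p/(m n:ℝ))^(m n) * ((n:ℝ)*q/((n - m n : ℕ):ℝ))^(n - m n)) := by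
    filter_upwards [hev1, hev2, eventually_ge_atTop 1] with n h1m h1l h1n
    have hkl : m n + (n - m n) = n := Nat.add_sub_cancel' (hm n)
    have hN0 : (0:ℝ) < n := by exact_mod_cast h1n
    have hK0 : (0:ℝ) < (m n:ℝ) := by exact_mod_cast h1m
    have hL0 : (0:ℝ) < ((n - m n : ℕ):ℝ) := by exact_mod_cast h1l
    have hsn : (0:ℝ) < Stirling.stirlingSeq n := stirling_pos h1n
    have hsk : (0:ℝ) < Stirling.stirlingSeq (m n) := stirling_pos h1m
    have hsl : (0:ℝ) < Stirling.stirlingSeq (n - m n) := stirling_pos h1l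
    have hsqN : (0:ℝ) < Real.sqrt (2*(n:ℝ)) := Real.sqrt_pos.2 (by positivity)
    have hsqK : (0:ℝ) < Real.sqrt (2*(m n:ℝ)) := Real.sqrt_pos.2 (by positivity)
    have hsqL : (0:ℝ) < Real.sqrt (2*((n - m n : ℕ):ℝ)) := Real.sqrt_pos.2 (by positivity)
    have hexp : Real.exp 1 ≠ 0 := Real.exp_ne_zero 1
    rw [Nat.cast_choose ℝ (hm n), stirling_fact h1n, stirling_fact h1m, stirling_fact h1l]
    have hpow : ((n:ℝ)/Real.exp 1)^n
        = ((n:ℝ)/Real.exp 1)^(m n) * ((n:ℝ)/Real.exp 1)^(n - m n) := by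
      rw [← pow_add, hkl]
    rw [hpow]
    field_simp
    have hKm : ((m n:ℝ))^(m n) * ((m n:ℝ)⁻¹)^(m n) = 1 := by
      rw [← mul_pow, mul_inv_cancel₀ hK0.ne', one_pow]
    have hLl : (((n - m n : ℕ):ℝ))^(n - m n) * ((((n - m n : ℕ):ℝ))⁻¹)^(n - m n) = 1 := by
      rw [← mul_pow, mul_inv_cancel₀ hL0.ne', one_pow]
    linear_combination
      (-((n:ℝ)^(m n) * (n:ℝ)^(n - m n) * (Real.exp 1)⁻¹^(m n) * (Real.exp 1)⁻¹^(n - m n)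
        * p^(m n) * q^(n - m n)) * 1) * hLl
      + (-((n:ℝ)^(m n) * (n:ℝ)^(n - m n) * (Real.exp 1)⁻¹^(m n) * (Real.exp 1)⁻¹^(n - m n)
        * p^(m n) * q^(n - m n)) * ((((n - m n : ℕ):ℝ))^(n - m n)
        * ((((n - m n : ℕ):ℝ))⁻¹)^(n - m n))) * hKm
  -- final assembly
  have hfinal := (hAlim.mul hBlim).mul hElim
  have hval : (Real.sqrt π/(Real.sqrt π*Real.sqrt π) * Real.sqrt 2⁻¹) * Real.exp (-x^2/2)
      = (1/Real.sqrt (2*π)) * Real.exp (-x^2/2) := by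
    rw [Real.sqrt_inv, Real.sqrt_mul (by norm_num : (0:ℝ) ≤ 2)]
    have h2 : Real.sqrt 2 ≠ 0 := by positivity
    have hπ' : Real.sqrt π ≠ 0 := ne_of_gt hπ0
    have hππ : Real.sqrt π * Real.sqrt π = π := Real.mul_self_sqrt Real.pi_pos.le
    field_simp
  rw [hval] at hfinal
  exact Tendsto.congr' (heq.mono fun n h => h.symm) hfinal
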